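/- arXiv:2106.11163 — 7 statements merged into one kernel-verified Lean document; each statement's English description precedes it below -/
import Mathlib

section
/- Let K be a real-valued function defined on the closed triangle T = {(x,y) : 0 ≤ y ≤ x ≤ 1} which is C² on T (i.e., K together with its partial derivatives ∂ₓK, ∂ᵧK, ∂ₓᵧK extends continuously to T). Let φ ∈ C_c^∞((0,1)) and set v(x) = ∫₀ˣ φ(r) dr. Then ∫₀¹ ∫₀ˣ K(x,y) φ(x) φ(y) dy dx = (1/2) K(1,0) v(1)² + (1/2) ∫₀¹ v(x)² (−∂ₓK(x,0)) dx + (1/2) ∫₀¹ ∫₀ˣ (−∂ₓᵧK(x,y)) (v(x) − v(y))² dy dx + (1/2) ∫₀¹ (∂ᵧK)(1,y) (v(1) − v(y))² dy. -/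
open MeasureTheory Set intervalIntegral

/-- The closed lower triangle `T = {(x,y) : 0 ≤ y ≤ x ≤ 1}`. -/
def lowerTriangle : Set (ℝ × ℝ) := {p | 0 ≤ p.2 ∧ p.2 ≤ p.1 ∧ p.1 ≤ 1}

lemma lowerTriangle_isClosed : IsClosed lowerTriangle := by
  have h : lowerTriangle = {p : ℝ × ℝ | 0 ≤ p.2} ∩ ({p : ℝ × ℝ | p.2 ≤ p.1} ∩ {p : ℝ × ℝ | p.1 ≤ 1}) := by
    ext p; simp [lowerTriangle, and_assoc]
  rw [h]
  exact (isClosed_le continuous_const continuous_snd).inter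
    ((isClosed_le continuous_snd continuous_fst).inter (isClosed_le continuous_fst continuous_const))

lemma lowerTriangle_meas : MeasurableSet lowerTriangle :=
  lowerTriangle_isClosed.measurableSet

lemma lowerTriangle_isCompact : IsCompact lowerTriangle := by
  refine ((isCompact_Icc (a := (0:ℝ)) (b := 1)).prod
    (isCompact_Icc (a := (0:ℝ)) (b := 1))).of_isClosed_subset lowerTriangle_isClosed ?_
  rintro ⟨x, y⟩ ⟨h0, h1, h2⟩
  exact ⟨⟨le_trans h0 h1, h2⟩, ⟨h0, le_trans h1 h2⟩⟩

lemma sliceY {f : ℝ → ℝ → ℝ}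
    (hf : ContinuousOn (fun p : ℝ × ℝ => f p.1 p.2) lowerTriangle)
    {x : ℝ} (hx1 : x ≤ 1) : ContinuousOn (fun y => f x y) (Icc 0 x) :=
  hf.comp (Continuous.continuousOn (by fun_prop : Continuous fun y : ℝ => (x, y)))
    (fun y hy => ⟨hy.1, hy.2, hx1⟩)

lemma sliceX {f : ℝ → ℝ → ℝ}
    (hf : ContinuousOn (fun p : ℝ × ℝ => f p.1 p.2) lowerTriangle)
    {y : ℝ} (hy0 : 0 ≤ y) : ContinuousOn (fun x => f x y) (Icc y 1) :=
  hf.comp (Continuous.continuousOn (by fun_prop : Continuous fun x : ℝ => (x, y)))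
    (fun x hx => ⟨hy0, hx.1, hx.2⟩)

/-- Fubini on the triangle together with integrability of the inner integral. -/
lemma tri_key (h : ℝ → ℝ → ℝ)
    (hc : ContinuousOn (fun p : ℝ × ℝ => h p.1 p.2) lowerTriangle) :
    IntervalIntegrable (fun x => ∫ y in (0:ℝ)..x, h x y) volume 0 1 ∧
    (∫ x in (0:ℝ)..1, ∫ y in (0:ℝ)..x, h x y)
      = ∫ y in (0:ℝ)..1, ∫ x in y..1, h x y := by
  set μ : Measure ℝ := volume.restrict (Ioc (0:ℝ) 1) with hμ
  set H : ℝ × ℝ → ℝ := lowerTriangle.indicator (fun q => h q.1 q.2) with hH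
  obtain ⟨C, hC⟩ := lowerTriangle_isCompact.exists_bound_of_continuousOn hc
  have hprod : μ.prod μ = (volume : Measure (ℝ × ℝ)).restrict (Ioc (0:ℝ) 1 ×ˢ Ioc (0:ℝ) 1) := by
    rw [hμ, Measure.prod_restrict, ← Measure.volume_eq_prod]
  haveI : IsFiniteMeasure μ := ⟨by rw [hμ]; simp⟩
  have hmeasH : AEStronglyMeasurable H (volume : Measure (ℝ × ℝ)) :=
    (aestronglyMeasurable_indicator_iff lowerTriangle_meas).2
      (hc.aestronglyMeasurable lowerTriangle_meas)
  have hint : Integrable H (μ.prod μ) := by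
    refine Integrable.mono' (integrable_const (max C 0)) ?_ ?_
    · rw [hprod]; exact hmeasH.restrict
    · filter_upwards with p
      by_cases hp : p ∈ lowerTriangle
      · rw [hH]; simp only [indicator_of_mem hp]
        exact le_max_of_le_left (hC p hp)
      · rw [hH]; simp [indicator_of_notMem hp]
  -- inner slice identities
  have hx_inner : ∀ x ∈ Ioc (0:ℝ) 1, (∫ y, H (x, y) ∂μ) = ∫ y in (0:ℝ)..x, h x y := by
    intro x hx
    have h1 : ∀ y ∈ Ioc (0:ℝ) 1, H (x, y) = (Icc 0 x).indicator (fun y => h x y) y := by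
      intro y hy
      by_cases hyx : y ≤ x
      · rw [hH, indicator_of_mem (show (x, y) ∈ lowerTriangle from ⟨hy.1.le, hyx, hx.2⟩),
          indicator_of_mem (show y ∈ Icc 0 x from ⟨hy.1.le, hyx⟩)]
      · rw [hH, indicator_of_notMem (fun hm => hyx hm.2.1),
          indicator_of_notMem (fun hm => hyx hm.2)]
    have h2 : Ioc (0:ℝ) 1 ∩ Icc 0 x = Ioc 0 x := by
      ext y
      simp only [mem_inter_iff, mem_Ioc, mem_Icc]
      constructor
      · rintro ⟨⟨a, _⟩, ⟨_, d⟩⟩; exact ⟨a, d⟩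
      · rintro ⟨a, b⟩; exact ⟨⟨a, b.trans hx.2⟩, a.le, b⟩
    calc (∫ y, H (x, y) ∂μ)
        = ∫ y in Ioc (0:ℝ) 1, (Icc 0 x).indicator (fun y => h x y) y :=
          setIntegral_congr_fun measurableSet_Ioc h1
      _ = ∫ y in Ioc (0:ℝ) 1 ∩ Icc 0 x, h x y := setIntegral_indicator measurableSet_Icc
      _ = ∫ y in Ioc (0:ℝ) x, h x y := by rw [h2]
      _ = ∫ y in (0:ℝ)..x, h x y := (integral_of_le hx.1.le).symm
  have hy_inner : ∀ y ∈ Ioc (0:ℝ) 1, (∫ x, H (x, y) ∂μ) = ∫ x in y..1, h x y := by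
    intro y hy
    have h1 : ∀ x ∈ Ioc (0:ℝ) 1, H (x, y) = (Icc y 1).indicator (fun x => h x y) x := by
      intro x hx
      by_cases hyx : y ≤ x
      · rw [hH, indicator_of_mem (show (x, y) ∈ lowerTriangle from ⟨hy.1.le, hyx, hx.2⟩),
          indicator_of_mem (show x ∈ Icc y 1 from ⟨hyx, hx.2⟩)]
      · rw [hH, indicator_of_notMem (fun hm => hyx hm.2.1),
          indicator_of_notMem (fun hm => hyx hm.1)]
    have h2 : Ioc (0:ℝ) 1 ∩ Icc y 1 = Icc y 1 :=
      inter_eq_self_of_subset_right (fun x hx => ⟨lt_of_lt_of_le hy.1 hx.1, hx.2⟩)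
    calc (∫ x, H (x, y) ∂μ)
        = ∫ x in Ioc (0:ℝ) 1, (Icc y 1).indicator (fun x => h x y) x :=
          setIntegral_congr_fun measurableSet_Ioc h1
      _ = ∫ x in Ioc (0:ℝ) 1 ∩ Icc y 1, h x y := setIntegral_indicator measurableSet_Icc
      _ = ∫ x in Icc y 1, h x y := by rw [h2]
      _ = ∫ x in Ioc y 1, h x y := integral_Icc_eq_integral_Ioc
      _ = ∫ x in y..1, h x y := (integral_of_le hy.2).symm
  have huncurry : Function.uncurry (fun x y => H (x, y)) = H := by
    funext p; simp [Function.uncurry]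
  constructor
  · rw [intervalIntegrable_iff_integrableOn_Ioc_of_le zero_le_one]
    have hintx : Integrable (fun x => ∫ y, H (x, y) ∂μ) μ := hint.integral_prod_left
    exact hintx.congr ((ae_restrict_iff' measurableSet_Ioc).2
      (Filter.Eventually.of_forall hx_inner))
  · have hswap : (∫ x, ∫ y, H (x, y) ∂μ ∂μ) = ∫ y, ∫ x, H (x, y) ∂μ ∂μ := by
      refine MeasureTheory.integral_integral_swap ?_
      rw [huncurry]; exact hint
    calc (∫ x in (0:ℝ)..1, ∫ y in (0:ℝ)..x, h x y)
        = ∫ x in Ioc (0:ℝ) 1, (∫ y in (0:ℝ)..x, h x y) := integral_of_le zero_le_one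
      _ = ∫ x, ∫ y, H (x, y) ∂μ ∂μ :=
          (setIntegral_congr_fun measurableSet_Ioc hx_inner).symm
      _ = ∫ y, ∫ x, H (x, y) ∂μ ∂μ := hswap
      _ = ∫ y in Ioc (0:ℝ) 1, (∫ x in y..1, h x y) :=
          setIntegral_congr_fun measurableSet_Ioc hy_inner
      _ = ∫ y in (0:ℝ)..1, ∫ x in y..1, h x y := (integral_of_le zero_le_one).symm

/-- Integration by parts identity on the triangle:
`K` is C² on `T` in the sense that its partial derivatives `Kx`, `Ky`, `Kxy`
exist within `T` and all of `K, Kx, Ky, Kxy` are continuous on `T`. -/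
theorem statement0
    (K Kx Ky Kxy : ℝ → ℝ → ℝ)
    (hKc : ContinuousOn (fun p : ℝ × ℝ => K p.1 p.2) lowerTriangle)
    (hKxc : ContinuousOn (fun p : ℝ × ℝ => Kx p.1 p.2) lowerTriangle)
    (hKyc : ContinuousOn (fun p : ℝ × ℝ => Ky p.1 p.2) lowerTriangle)
    (hKxyc : ContinuousOn (fun p : ℝ × ℝ => Kxy p.1 p.2) lowerTriangle)
    (hKx : ∀ x y : ℝ, (x, y) ∈ lowerTriangle →
      HasDerivWithinAt (fun x' => K x' y) (Kx x y) (Icc y 1) x)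
    (hKy : ∀ x y : ℝ, (x, y) ∈ lowerTriangle →
      HasDerivWithinAt (fun y' => K x y') (Ky x y) (Icc 0 x) y)
    (hKxy : ∀ x y : ℝ, (x, y) ∈ lowerTriangle →
      HasDerivWithinAt (fun y' => Kx x y') (Kxy x y) (Icc 0 x) y)
    (φ : ℝ → ℝ) (hφ : ContDiff ℝ (⊤ : ℕ∞) φ) (hφs : tsupport φ ⊆ Ioo 0 1)
    (v : ℝ → ℝ) (hv : ∀ x : ℝ, v x = ∫ r in (0:ℝ)..x, φ r) :
    (∫ x in (0:ℝ)..1, ∫ y in (0:ℝ)..x, K x y * φ x * φ y)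
      = 1/2 * K 1 0 * (v 1)^2
      + 1/2 * (∫ x in (0:ℝ)..1, (v x)^2 * (-(Kx x 0)))
      + 1/2 * (∫ x in (0:ℝ)..1, ∫ y in (0:ℝ)..x, (-(Kxy x y)) * (v x - v y)^2)
      + 1/2 * (∫ y in (0:ℝ)..1, Ky 1 y * (v 1 - v y)^2) := by
  have hφc : Continuous φ := hφ.continuous
  have vd : ∀ x : ℝ, HasDerivAt v (φ x) x := by
    intro x
    have h0 : HasDerivAt (fun u => ∫ r in (0:ℝ)..u, φ r) (φ x) x :=
      intervalIntegral.integral_hasDerivAt_right (hφc.intervalIntegrable 0 x)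
        (hφc.stronglyMeasurable.stronglyMeasurableAtFilter) hφc.continuousAt
    have : v = fun u => ∫ r in (0:ℝ)..u, φ r := funext hv
    rw [this]; exact h0
  have vc : Continuous v := by
    refine continuous_iff_continuousAt.2 fun x => (vd x).continuousAt
  have hv0 : v 0 = 0 := by rw [hv]; simp
  -- P1 : inner IBP in y at each fixed x
  have P1 : ∀ x ∈ Icc (0:ℝ) 1,
      (∫ y in (0:ℝ)..x, 2 * Kx x y * (v x - v y) * φ y)
        = Kx x 0 * (v x)^2 + ∫ y in (0:ℝ)..x, Kxy x y * (v x - v y)^2 := by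
    intro x hx
    have hKxcont : ContinuousOn (fun y => Kx x y) (Icc 0 x) := sliceY hKxc hx.2
    have hKxycont : ContinuousOn (fun y => Kxy x y) (Icc 0 x) := sliceY hKxyc hx.2
    have hsq : Continuous (fun y => (v x - v y)^2) := by fun_prop
    have ftc : (∫ y in (0:ℝ)..x,
        (Kxy x y * (v x - v y)^2 - 2 * Kx x y * (v x - v y) * φ y))
        = Kx x x * (v x - v x)^2 - Kx x 0 * (v x - v 0)^2 := by
      refine integral_eq_sub_of_hasDeriv_right_of_le hx.1
        (hKxcont.mul hsq.continuousOn) ?_ ?_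
      · intro y hy
        have d1 : HasDerivAt (fun y' => Kx x y') (Kxy x y) y :=
          (hKxy x y ⟨hy.1.le, hy.2.le, hx.2⟩).hasDerivAt (Icc_mem_nhds hy.1 hy.2)
        have d2 : HasDerivAt (fun y' => (v x - v y')^2)
            ((2:ℕ) * (v x - v y)^(2-1) * (-φ y)) y :=
          (((vd y).const_sub (v x)).pow 2)
        have := (d1.mul d2).hasDerivWithinAt (s := Ioi y)
        convert this using 1
        push_cast; ring
      · apply ContinuousOn.intervalIntegrable
        rw [uIcc_of_le hx.1]
        exact (hKxycont.mul hsq.continuousOn).sub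
          (((continuousOn_const.mul hKxcont).mul
            (by fun_prop : Continuous fun y => v x - v y).continuousOn).mul hφc.continuousOn)
    have hsub : (∫ y in (0:ℝ)..x,
        (Kxy x y * (v x - v y)^2 - 2 * Kx x y * (v x - v y) * φ y))
        = (∫ y in (0:ℝ)..x, Kxy x y * (v x - v y)^2)
          - ∫ y in (0:ℝ)..x, 2 * Kx x y * (v x - v y) * φ y := by
      apply intervalIntegral.integral_sub
      · apply ContinuousOn.intervalIntegrable
        rw [uIcc_of_le hx.1]
        exact hKxycont.mul hsq.continuousOn
      · apply ContinuousOn.intervalIntegrable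
        rw [uIcc_of_le hx.1]
        exact ((continuousOn_const.mul hKxcont).mul
          (by fun_prop : Continuous fun y => v x - v y).continuousOn).mul hφc.continuousOn
    rw [hsub] at ftc
    rw [hv0] at ftc
    have : Kx x x * (v x - v x)^2 = 0 := by simp
    rw [this] at ftc
    have h2 : Kx x 0 * (v x - 0)^2 = Kx x 0 * (v x)^2 := by ring
    rw [h2] at ftc
    linarith
  -- P2 : FTC in x at each fixed y
  have P2 : ∀ y ∈ Icc (0:ℝ) 1,
      (∫ x in y..1, (2 * Kx x y * (v x - v y) * φ y + 2 * (K x y * φ x * φ y)))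
        = 2 * K 1 y * (v 1 - v y) * φ y := by
    intro y hy
    have hKcont : ContinuousOn (fun x => K x y) (Icc y 1) := sliceX hKc hy.1
    have hKxcont : ContinuousOn (fun x => Kx x y) (Icc y 1) := sliceX hKxc hy.1
    have ftc : (∫ x in y..1,
        (2 * Kx x y * (v x - v y) * φ y + 2 * (K x y * φ x * φ y)))
        = 2 * K 1 y * (v 1 - v y) * φ y - 2 * K y y * (v y - v y) * φ y := by
      refine integral_eq_sub_of_hasDeriv_right_of_le
        (f := fun x => 2 * K x y * (v x - v y) * φ y)
        (f' := fun x => 2 * Kx x y * (v x - v y) * φ y + 2 * (K x y * φ x * φ y))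
        hy.2
        (((continuousOn_const.mul hKcont).mul
          (by fun_prop : Continuous fun x => v x - v y).continuousOn).mul
          continuousOn_const) ?_ ?_
      · intro x hx
        have d1 : HasDerivAt (fun x' => K x' y) (Kx x y) x :=
          (hKx x y ⟨hy.1, hx.1.le, hx.2.le⟩).hasDerivAt (Icc_mem_nhds hx.1 hx.2)
        have d2 : HasDerivAt (fun x' => v x' - v y) (φ x) x := (vd x).sub_const (v y)
        have := (((d1.const_mul 2).mul d2).mul_const (φ y)).hasDerivWithinAt (s := Ioi x)
        convert this using 1
        · funext z; simp only [Pi.mul_apply]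
        · ring
      · apply ContinuousOn.intervalIntegrable
        rw [uIcc_of_le hy.2]
        refine ContinuousOn.add ?_ ?_
        · exact ((continuousOn_const.mul hKxcont).mul
            (by fun_prop : Continuous fun x => v x - v y).continuousOn).mul continuousOn_const
        · exact continuousOn_const.mul ((hKcont.mul hφc.continuousOn).mul continuousOn_const)
      -- fun x => φ y is const in x, but φ x is not; fix below if needed
    rw [ftc]
    ring
  -- P6 : IBP in y at x = 1
  have P6 : (∫ y in (0:ℝ)..1, Ky 1 y * (v 1 - v y)^2)
      = (∫ y in (0:ℝ)..1, 2 * K 1 y * (v 1 - v y) * φ y) - K 1 0 * (v 1)^2 := by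
    have hKcont : ContinuousOn (fun y => K 1 y) (Icc 0 1) := sliceY hKc le_rfl
    have hKycont : ContinuousOn (fun y => Ky 1 y) (Icc 0 1) := sliceY hKyc le_rfl
    have hsq : Continuous (fun y => (v 1 - v y)^2) := by fun_prop
    have ftc : (∫ y in (0:ℝ)..1,
        (Ky 1 y * (v 1 - v y)^2 - 2 * K 1 y * (v 1 - v y) * φ y))
        = K 1 1 * (v 1 - v 1)^2 - K 1 0 * (v 1 - v 0)^2 := by
      refine integral_eq_sub_of_hasDeriv_right_of_le zero_le_one
        (hKcont.mul hsq.continuousOn) ?_ ?_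
      · intro y hy
        have d1 : HasDerivAt (fun y' => K 1 y') (Ky 1 y) y :=
          (hKy 1 y ⟨hy.1.le, hy.2.le, le_rfl⟩).hasDerivAt (Icc_mem_nhds hy.1 hy.2)
        have d2 : HasDerivAt (fun y' => (v 1 - v y')^2)
            ((2:ℕ) * (v 1 - v y)^(2-1) * (-φ y)) y :=
          (((vd y).const_sub (v 1)).pow 2)
        have := (d1.mul d2).hasDerivWithinAt (s := Ioi y)
        convert this using 1
        push_cast; ring
      · apply ContinuousOn.intervalIntegrable
        rw [uIcc_of_le zero_le_one]
        exact (hKycont.mul hsq.continuousOn).sub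
          (((continuousOn_const.mul hKcont).mul
            (by fun_prop : Continuous fun y => v 1 - v y).continuousOn).mul hφc.continuousOn)
    have hsub : (∫ y in (0:ℝ)..1,
        (Ky 1 y * (v 1 - v y)^2 - 2 * K 1 y * (v 1 - v y) * φ y))
        = (∫ y in (0:ℝ)..1, Ky 1 y * (v 1 - v y)^2)
          - ∫ y in (0:ℝ)..1, 2 * K 1 y * (v 1 - v y) * φ y := by
      apply intervalIntegral.integral_sub
      · apply ContinuousOn.intervalIntegrable
        rw [uIcc_of_le zero_le_one]
        exact hKycont.mul hsq.continuousOn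
      · apply ContinuousOn.intervalIntegrable
        rw [uIcc_of_le zero_le_one]
        exact ((continuousOn_const.mul hKcont).mul
          (by fun_prop : Continuous fun y => v 1 - v y).continuousOn).mul hφc.continuousOn
    rw [hsub, hv0] at ftc
    have h1 : K 1 1 * (v 1 - v 1)^2 = 0 := by simp
    rw [h1] at ftc
    have h2 : K 1 0 * (v 1 - 0)^2 = K 1 0 * (v 1)^2 := by ring
    rw [h2] at ftc
    linarith
  -- Fubini applications
  have tkQ := tri_key (fun x y => K x y * φ x * φ y)
    ((hKc.mul (hφc.comp continuous_fst).continuousOn).mul (hφc.comp continuous_snd).continuousOn)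
  have tkA := tri_key (fun x y => Kxy x y * (v x - v y)^2)
    (hKxyc.mul (by fun_prop : Continuous fun p : ℝ × ℝ => (v p.1 - v p.2)^2).continuousOn)
  have tkH := tri_key (fun x y => 2 * Kx x y * (v x - v y) * φ y + 2 * (K x y * φ x * φ y))
    (ContinuousOn.add
      (((continuousOn_const.mul hKxc).mul
        (by fun_prop : Continuous fun p : ℝ × ℝ => v p.1 - v p.2).continuousOn).mul
        (hφc.comp continuous_snd).continuousOn)
      (continuousOn_const.mul ((hKc.mul (hφc.comp continuous_fst).continuousOn).mul
        (hφc.comp continuous_snd).continuousOn)))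
  -- E3' : double integral of h₃ equals boundary term
  have E3 : (∫ x in (0:ℝ)..1, ∫ y in (0:ℝ)..x,
        (2 * Kx x y * (v x - v y) * φ y + 2 * (K x y * φ x * φ y)))
      = ∫ y in (0:ℝ)..1, 2 * K 1 y * (v 1 - v y) * φ y := by
    rw [tkH.2]
    apply integral_congr
    intro y hy
    rw [uIcc_of_le zero_le_one] at hy
    exact P2 y hy
  -- E4' : per-x splitting of the inner integral of h₃
  have E4 : ∀ x ∈ Icc (0:ℝ) 1,
      (∫ y in (0:ℝ)..x, (2 * Kx x y * (v x - v y) * φ y + 2 * (K x y * φ x * φ y)))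
        = Kx x 0 * (v x)^2 + ((∫ y in (0:ℝ)..x, Kxy x y * (v x - v y)^2)
          + 2 * ∫ y in (0:ℝ)..x, K x y * φ x * φ y) := by
    intro x hx
    have hKxcont : ContinuousOn (fun y => Kx x y) (Icc 0 x) := sliceY hKxc hx.2
    have hKcont : ContinuousOn (fun y => K x y) (Icc 0 x) := sliceY hKc hx.2
    have i1 : IntervalIntegrable (fun y => 2 * Kx x y * (v x - v y) * φ y) volume 0 x := by
      apply ContinuousOn.intervalIntegrable
      rw [uIcc_of_le hx.1]
      exact ((continuousOn_const.mul hKxcont).mul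
        (by fun_prop : Continuous fun y => v x - v y).continuousOn).mul hφc.continuousOn
    have i2 : IntervalIntegrable (fun y => 2 * (K x y * φ x * φ y)) volume 0 x := by
      apply ContinuousOn.intervalIntegrable
      rw [uIcc_of_le hx.1]
      exact continuousOn_const.mul ((hKcont.mul continuousOn_const).mul hφc.continuousOn)
    rw [integral_add i1 i2, P1 x hx, intervalIntegral.integral_const_mul]
    ring
  -- E5' : split the outer integral
  have hc1 : IntervalIntegrable (fun x => Kx x 0 * (v x)^2) volume 0 1 := by
    apply ContinuousOn.intervalIntegrable
    rw [uIcc_of_le zero_le_one]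
    exact (sliceX hKxc le_rfl).mul (by fun_prop : Continuous fun x => (v x)^2).continuousOn
  have E5 : (∫ x in (0:ℝ)..1, ∫ y in (0:ℝ)..x,
        (2 * Kx x y * (v x - v y) * φ y + 2 * (K x y * φ x * φ y)))
      = (∫ x in (0:ℝ)..1, Kx x 0 * (v x)^2)
        + ((∫ x in (0:ℝ)..1, ∫ y in (0:ℝ)..x, Kxy x y * (v x - v y)^2)
          + 2 * ∫ x in (0:ℝ)..1, ∫ y in (0:ℝ)..x, K x y * φ x * φ y) := by
    have hcongr : (∫ x in (0:ℝ)..1, ∫ y in (0:ℝ)..x,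
          (2 * Kx x y * (v x - v y) * φ y + 2 * (K x y * φ x * φ y)))
        = ∫ x in (0:ℝ)..1, (Kx x 0 * (v x)^2 + ((∫ y in (0:ℝ)..x, Kxy x y * (v x - v y)^2)
            + 2 * ∫ y in (0:ℝ)..x, K x y * φ x * φ y)) := by
      apply integral_congr
      intro x hx
      rw [uIcc_of_le zero_le_one] at hx
      exact E4 x hx
    rw [hcongr, integral_add hc1 (tkA.1.add (tkQ.1.const_mul 2)),
      integral_add tkA.1 (tkQ.1.const_mul 2), intervalIntegral.integral_const_mul]
  -- negation normalizations
  have N1 : (∫ x in (0:ℝ)..1, (v x)^2 * (-(Kx x 0)))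
      = - ∫ x in (0:ℝ)..1, Kx x 0 * (v x)^2 := by
    rw [← intervalIntegral.integral_neg]
    apply integral_congr
    intro x _
    ring
  have N2 : (∫ x in (0:ℝ)..1, ∫ y in (0:ℝ)..x, (-(Kxy x y)) * (v x - v y)^2)
      = - ∫ x in (0:ℝ)..1, ∫ y in (0:ℝ)..x, Kxy x y * (v x - v y)^2 := by
    rw [← intervalIntegral.integral_neg]
    apply integral_congr
    intro x _
    show (∫ y in (0:ℝ)..x, (-(Kxy x y)) * (v x - v y)^2)
      = - ∫ y in (0:ℝ)..x, Kxy x y * (v x - v y)^2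
    rw [← intervalIntegral.integral_neg]
    apply integral_congr
    intro y _
    ring
  rw [N1, N2, P6]
  have E35 := E3.symm.trans E5
  linarith
end

section
/- Let K̃ be a real-valued function on the closed triangle T = {(x,y) : 0 ≤ y ≤ x ≤ 1} which is C² on T, satisfies K̃ ≥ 0 on T, and satisfies ∂ₓK̃ ≤ 0, ∂ᵧK̃ ≥ 0 and ∂ₓᵧK̃ ≤ 0 at every point of D₋ = {(x,y) : 0 < y < x < 1}. Let ψ : (0,1) → (0,∞) be an arbitrary positive function, and define the symmetric kernel K on (0,1)×(0,1) by K(x,y) = K̃(max(x,y), min(x,y)) / (ψ(x) ψ(y)). Then K is semi-positive definite: for any points t₁, …, t_m ∈ (0,1) and any reals c₁, …, c_m one has ∑_{i=1}^m ∑_{j=1}^m K(t_i, t_j) c_i c_j ≥ 0. -/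
open MeasureTheory Set

/-- The open lower triangle `D₋ = {(x,y) : 0 < y < x < 1}`. -/
def lowerTriangleOpen : Set (ℝ × ℝ) := {p | 0 < p.2 ∧ p.2 < p.1 ∧ p.1 < 1}

/-!
Sort the points, `v₀ ≤ ⋯ ≤ vₙ₋₁`, and extend `K̃(v_l, v_{k-1})` by zero to `k = 0` and `l = n`.
Two-dimensional telescoping writes `K̃(v_q, v_p)` (`p ≤ q`) as `∑_{k ≤ p, q ≤ l} λ_{kl}`, where
`λ_{kl}` is a mixed second difference, so the quadratic form equals
`∑_{k ≤ l} λ_{kl} (∑_{k ≤ i ≤ l} aᵢ)²`. By the mean value theorem the sign conditions give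
`λ_{kl} ≥ 0`: `K̃ ≥ 0` for the corner coefficient, `∂ₓK̃ ≤ 0` and `∂ᵧK̃ ≥ 0` on the two edges,
`∂ₓᵧK̃ ≤ 0` inside. The weight `ψ` only rescales the coefficients: `aᵢ = cᵢ / ψ(tᵢ)`.
-/

lemma antitoneOn_Icc_of_hasDerivWithinAt_nonpos {f f' : ℝ → ℝ} {S : Set ℝ} {a b : ℝ}
    (hS : Icc a b ⊆ S) (hf : ∀ x ∈ Icc a b, HasDerivWithinAt f (f' x) S x)
    (hf' : ∀ x ∈ Ioo a b, f' x ≤ 0) : AntitoneOn f (Icc a b) :=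
  antitoneOn_of_hasDerivWithinAt_nonpos (convex_Icc a b)
    (fun x hx => (hf x hx).continuousWithinAt.mono hS)
    (fun x hx => by
      rw [interior_Icc] at hx ⊢
      exact (hf x (Ioo_subset_Icc_self hx)).mono (Ioo_subset_Icc_self.trans hS))
    (by rwa [interior_Icc])

lemma monotoneOn_Icc_of_hasDerivWithinAt_nonneg {f f' : ℝ → ℝ} {S : Set ℝ} {a b : ℝ}
    (hS : Icc a b ⊆ S) (hf : ∀ x ∈ Icc a b, HasDerivWithinAt f (f' x) S x)
    (hf' : ∀ x ∈ Ioo a b, 0 ≤ f' x) : MonotoneOn f (Icc a b) :=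
  monotoneOn_of_hasDerivWithinAt_nonneg (convex_Icc a b)
    (fun x hx => (hf x hx).continuousWithinAt.mono hS)
    (fun x hx => by
      rw [interior_Icc] at hx ⊢
      exact (hf x (Ioo_subset_Icc_self hx)).mono (Ioo_subset_Icc_self.trans hS))
    (by rwa [interior_Icc])

section LowerTriangle

variable {K K' : ℝ → ℝ → ℝ}

lemma antitone_fst_of_hasDerivWithinAt
    (hK : ∀ x y : ℝ, (x, y) ∈ lowerTriangle →
      HasDerivWithinAt (fun x' => K x' y) (K' x y) (Icc y 1) x)
    (hK' : ∀ x y : ℝ, (x, y) ∈ lowerTriangleOpen → K' x y ≤ 0)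
    {x x' y : ℝ} (hy : 0 < y) (hyx : y ≤ x) (hxx' : x ≤ x') (hx' : x' ≤ 1) :
    K x' y ≤ K x y :=
  antitoneOn_Icc_of_hasDerivWithinAt_nonpos (Icc_subset_Icc hyx hx')
    (fun z hz => hK z y ⟨hy.le, hyx.trans hz.1, hz.2.trans hx'⟩)
    (fun z hz => hK' z y ⟨hy, hyx.trans_lt hz.1, hz.2.trans_le hx'⟩)
    (left_mem_Icc.2 hxx') (right_mem_Icc.2 hxx') hxx'

lemma monotone_snd_of_hasDerivWithinAt
    (hK : ∀ x y : ℝ, (x, y) ∈ lowerTriangle →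
      HasDerivWithinAt (fun y' => K x y') (K' x y) (Icc 0 x) y)
    (hK' : ∀ x y : ℝ, (x, y) ∈ lowerTriangleOpen → 0 ≤ K' x y)
    {x y y' : ℝ} (hy : 0 ≤ y) (hyy' : y ≤ y') (hy'x : y' ≤ x) (hx : x < 1) :
    K x y ≤ K x y' :=
  monotoneOn_Icc_of_hasDerivWithinAt_nonneg (Icc_subset_Icc hy hy'x)
    (fun z hz => hK x z ⟨hy.trans hz.1, hz.2.trans hy'x, hx.le⟩)
    (fun z hz => hK' x z ⟨hy.trans_lt hz.1, hz.2.trans_le hy'x, hx⟩)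
    (left_mem_Icc.2 hyy') (right_mem_Icc.2 hyy') hyy'

lemma antitone_snd_of_hasDerivWithinAt
    (hK : ∀ x y : ℝ, (x, y) ∈ lowerTriangle →
      HasDerivWithinAt (fun y' => K x y') (K' x y) (Icc 0 x) y)
    (hK' : ∀ x y : ℝ, (x, y) ∈ lowerTriangleOpen → K' x y ≤ 0)
    {x y y' : ℝ} (hy : 0 ≤ y) (hyy' : y ≤ y') (hy'x : y' ≤ x) (hx : x < 1) :
    K x y' ≤ K x y :=
  antitoneOn_Icc_of_hasDerivWithinAt_nonpos (Icc_subset_Icc hy hy'x)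
    (fun z hz => hK x z ⟨hy.trans hz.1, hz.2.trans hy'x, hx.le⟩)
    (fun z hz => hK' x z ⟨hy.trans_lt hz.1, hz.2.trans_le hy'x, hx⟩)
    (left_mem_Icc.2 hyy') (right_mem_Icc.2 hyy') hyy'

lemma submodular_of_hasDerivWithinAt {Kx Kxy : ℝ → ℝ → ℝ}
    (hKx : ∀ x y : ℝ, (x, y) ∈ lowerTriangle →
      HasDerivWithinAt (fun x' => K x' y) (Kx x y) (Icc y 1) x)
    (hKxy : ∀ x y : ℝ, (x, y) ∈ lowerTriangle →
      HasDerivWithinAt (fun y' => Kx x y') (Kxy x y) (Icc 0 x) y)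
    (hKxy' : ∀ x y : ℝ, (x, y) ∈ lowerTriangleOpen → Kxy x y ≤ 0)
    {x x' y y' : ℝ} (hy : 0 ≤ y) (hyy' : y ≤ y') (hy'x : y' ≤ x) (hxx' : x ≤ x') (hx' : x' ≤ 1) :
    K x y + K x' y' ≤ K x' y + K x y' := by
  have hanti : AntitoneOn (fun z => K z y' - K z y) (Icc x x') :=
    antitoneOn_Icc_of_hasDerivWithinAt_nonpos (Icc_subset_Icc hy'x hx')
      (fun z hz => (hKx z y' ⟨hy.trans hyy', hy'x.trans hz.1, hz.2.trans hx'⟩).sub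
        ((hKx z y ⟨hy, (hyy'.trans hy'x).trans hz.1, hz.2.trans hx'⟩).mono
          (Icc_subset_Icc hyy' le_rfl)))
      (fun z hz => sub_nonpos.2 <| antitone_snd_of_hasDerivWithinAt hKxy hKxy' hy hyy'
        (hy'x.trans hz.1.le) (hz.2.trans_le hx'))
  have := hanti (left_mem_Icc.2 hxx') (right_mem_Icc.2 hxx') hxx'
  simp only at this
  linarith

end LowerTriangle

section Discrete

open Finset

def mixedDiff (E : ℕ → ℕ → ℝ) (k l : ℕ) : ℝ :=
  (E (k + 1) l - E k l) - (E (k + 1) (l + 1) - E k (l + 1))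

lemma sum_range_sum_Ico_mixedDiff (E : ℕ → ℕ → ℝ) (p : ℕ) {q n : ℕ} (hqn : q ≤ n) :
    ∑ k ∈ range p, ∑ l ∈ Ico q n, mixedDiff E k l = (E p q - E p n) - (E 0 q - E 0 n) := by
  have hl : ∀ k, ∑ l ∈ Ico q n, mixedDiff E k l =
      (E (k + 1) q - E (k + 1) n) - (E k q - E k n) := fun k => calc
    _ = -∑ l ∈ Ico q n, ((E (k + 1) (l + 1) - E k (l + 1)) - (E (k + 1) l - E k l)) := by
      rw [← sum_neg_distrib]; simp only [mixedDiff, neg_sub]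
    _ = _ := by rw [sum_Ico_sub (fun l => E (k + 1) l - E k l) hqn]; ring
  simp only [hl]
  exact sum_range_sub (fun k => E k q - E k n) p

lemma sum_sum_mul_nonneg_of_eq_sum_intervals {n : ℕ} {G w : ℕ → ℕ → ℝ} (a : ℕ → ℝ)
    (hw : ∀ k l, k ≤ l → l < n → 0 ≤ w k l)
    (hG : ∀ p q, p ≤ q → q < n → G p q = ∑ k ∈ range (p + 1), ∑ l ∈ Ico q n, w k l) :
    0 ≤ ∑ i ∈ range n, ∑ j ∈ range n, a i * a j * G (min i j) (max i j) := by
  set b : ℕ → ℕ → ℕ → ℝ := fun k l i => if k ≤ i ∧ i ≤ l then a i else 0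
  have hterm : ∀ i ∈ range n, ∀ j ∈ range n, a i * a j * G (min i j) (max i j) =
      ∑ k ∈ range n, ∑ l ∈ range n, w k l * (b k l i * b k l j) := by
    intro i hi j hj
    rw [Finset.mem_range] at hi hj
    have hk : (range n).filter (· ≤ min i j) = range (min i j + 1) := by
      ext k; simp only [mem_filter, Finset.mem_range]; omega
    have hl : (range n).filter (max i j ≤ ·) = Finset.Ico (max i j) n := by
      ext l; simp only [mem_filter, Finset.mem_range, Finset.mem_Ico]; omega
    rw [hG _ _ min_le_max (max_lt hi hj), ← hk, ← hl, sum_filter, mul_sum]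
    refine sum_congr rfl fun k _ => ?_
    split_ifs with hki
    · rw [sum_filter, mul_sum]
      refine sum_congr rfl fun l _ => ?_
      simp only [b]
      split_ifs <;> first | (exfalso; omega) | ring
    · refine (mul_zero _).trans (sum_eq_zero fun l _ => ?_).symm
      simp only [b]
      split_ifs <;> first | (exfalso; omega) | ring
  calc (0 : ℝ) ≤ ∑ k ∈ range n, ∑ l ∈ range n, w k l * (∑ i ∈ range n, b k l i) ^ 2 := by
        refine sum_nonneg fun k _ => sum_nonneg fun l hl => ?_
        rcases le_or_gt k l with hkl | hlk
        · exact mul_nonneg (hw k l hkl (Finset.mem_range.1 hl)) (sq_nonneg _)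
        · rw [sum_eq_zero fun i _ => if_neg (by omega)]; simp
    _ = ∑ x ∈ range n ×ˢ range n, ∑ y ∈ range n ×ˢ range n,
          w x.1 x.2 * (b x.1 x.2 y.1 * b x.1 x.2 y.2) := by
        simp only [sum_product, sq, sum_mul_sum]
        simp only [mul_sum]
    _ = ∑ y ∈ range n ×ˢ range n, ∑ x ∈ range n ×ˢ range n,
          w x.1 x.2 * (b x.1 x.2 y.1 * b x.1 x.2 y.2) := sum_comm
    _ = ∑ i ∈ range n, ∑ j ∈ range n, ∑ k ∈ range n, ∑ l ∈ range n,
          w k l * (b k l i * b k l j) := by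
        simp only [sum_product]
    _ = _ := (sum_congr rfl fun i hi => sum_congr rfl (hterm i hi)).symm

/-- Discrete form of `K̃ ≥ 0`, `∂ₓK̃ ≤ 0`, `∂ᵧK̃ ≥ 0`, `∂ₓᵧK̃ ≤ 0` below the diagonal of `s × s`. -/
structure SignConditionsOn (F : ℝ → ℝ → ℝ) (s : Set ℝ) : Prop where
  nonneg : ∀ x ∈ s, ∀ y ∈ s, y ≤ x → 0 ≤ F x y
  antitone_fst : ∀ x ∈ s, ∀ x' ∈ s, ∀ y ∈ s, y ≤ x → x ≤ x' → F x' y ≤ F x y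
  monotone_snd : ∀ x ∈ s, ∀ y ∈ s, ∀ y' ∈ s, y ≤ y' → y' ≤ x → F x y ≤ F x y'
  submodular : ∀ x ∈ s, ∀ x' ∈ s, ∀ y ∈ s, ∀ y' ∈ s, y ≤ y' → y' ≤ x → x ≤ x' →
    F x y + F x' y' ≤ F x' y + F x y'

namespace SignConditionsOn

variable {F : ℝ → ℝ → ℝ} {s : Set ℝ}

lemma sum_sum_mul_nonneg_of_monotone (hF : SignConditionsOn F s) {w : ℕ → ℝ} (hw : Monotone w)
    (hws : ∀ k, w k ∈ s) (n : ℕ) (a : ℕ → ℝ) :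
    0 ≤ ∑ i ∈ range n, ∑ j ∈ range n, a i * a j * F (w (max i j)) (w (min i j)) := by
  set E : ℕ → ℕ → ℝ := fun k l => if k = 0 ∨ n ≤ l then 0 else F (w l) (w (k - 1))
  refine sum_sum_mul_nonneg_of_eq_sum_intervals a (G := fun p q => F (w q) (w p))
    (w := mixedDiff E) (fun k l hkl hln => ?_) (fun p q _ hqn => ?_)
  · rcases k with _ | k <;> by_cases hl : n ≤ l + 1 <;> simp [mixedDiff, E, hl, hln.not_ge]
    · exact hF.nonneg _ (hws l) _ (hws 0) (hw l.zero_le)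
    · exact hF.antitone_fst _ (hws l) _ (hws _) _ (hws 0) (hw l.zero_le) (hw l.le_succ)
    · exact hF.monotone_snd _ (hws l) _ (hws k) _ (hws _) (hw k.le_succ) (hw hkl)
    · linarith [hF.submodular _ (hws l) _ (hws _) _ (hws k) _ (hws _) (hw k.le_succ) (hw hkl)
        (hw l.le_succ)]
  · rw [sum_range_sum_Ico_mixedDiff E (p + 1) hqn.le]
    simp [E, hqn.not_ge]

theorem sum_sum_mul_nonneg (hF : SignConditionsOn F s) {m : ℕ} (t : Fin m → ℝ)
    (ht : ∀ i, t i ∈ s) (a : Fin m → ℝ) :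
    0 ≤ ∑ i, ∑ j, a i * a j * F (max (t i) (t j)) (min (t i) (t j)) := by
  cases m with
  | zero => simp
  | succ m =>
  set σ := Tuple.sort t
  have hw : Monotone fun k => t (σ (Fin.clamp k m)) :=
    (Tuple.monotone_sort t).comp Fin.clamp_monotone
  have key := hF.sum_sum_mul_nonneg_of_monotone hw (fun k => ht _) (m + 1)
    (fun k => a (σ (Fin.clamp k m)))
  rw [← Fintype.sum_equiv σ _ _ fun i => Fintype.sum_equiv σ _ _ fun j => rfl]
  simp only [← Fin.sum_univ_eq_sum_range] at key
  have hclamp : ∀ i : Fin (m + 1), Fin.clamp i m = i :=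
    fun i => Fin.ext (min_eq_left (Nat.le_of_lt_succ i.isLt))
  convert key using 4 with i _ j _ <;> simp only [hw.map_max, hw.map_min, hclamp]

end SignConditionsOn

end Discrete

theorem statement2_general
    (Kt Kx Ky Kxy : ℝ → ℝ → ℝ)
    (hKx : ∀ x y : ℝ, (x, y) ∈ lowerTriangle →
      HasDerivWithinAt (fun x' => Kt x' y) (Kx x y) (Icc y 1) x)
    (hKy : ∀ x y : ℝ, (x, y) ∈ lowerTriangle →
      HasDerivWithinAt (fun y' => Kt x y') (Ky x y) (Icc 0 x) y)
    (hKxy : ∀ x y : ℝ, (x, y) ∈ lowerTriangle →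
      HasDerivWithinAt (fun y' => Kx x y') (Kxy x y) (Icc 0 x) y)
    (hKnn : ∀ x y : ℝ, (x, y) ∈ lowerTriangle → 0 ≤ Kt x y)
    (hsx : ∀ x y : ℝ, (x, y) ∈ lowerTriangleOpen → Kx x y ≤ 0)
    (hsy : ∀ x y : ℝ, (x, y) ∈ lowerTriangleOpen → 0 ≤ Ky x y)
    (hsxy : ∀ x y : ℝ, (x, y) ∈ lowerTriangleOpen → Kxy x y ≤ 0)
    (ψ : ℝ → ℝ)
    (m : ℕ) (t : Fin m → ℝ) (ht : ∀ i, t i ∈ Ioo (0:ℝ) 1) (c : Fin m → ℝ) :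
    0 ≤ ∑ i : Fin m, ∑ j : Fin m,
      (Kt (max (t i) (t j)) (min (t i) (t j)) / (ψ (t i) * ψ (t j))) * c i * c j := by
  have hK : SignConditionsOn Kt (Ioo 0 1) :=
    { nonneg := fun x hx y hy hyx => hKnn x y ⟨hy.1.le, hyx, hx.2.le⟩
      antitone_fst := fun _ _ _ hx' _ hy hyx hxx' =>
        antitone_fst_of_hasDerivWithinAt hKx hsx hy.1 hyx hxx' hx'.2.le
      monotone_snd := fun _ hx _ hy _ _ hyy' hy'x =>
        monotone_snd_of_hasDerivWithinAt hKy hsy hy.1.le hyy' hy'x hx.2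
      submodular := fun _ _ _ hx' _ hy _ _ hyy' hy'x hxx' =>
        submodular_of_hasDerivWithinAt hKx hKxy hsxy hy.1.le hyy' hy'x hxx' hx'.2.le }
  refine (hK.sum_sum_mul_nonneg t ht fun i => c i / ψ (t i)).trans_eq ?_
  exact Finset.sum_congr rfl fun i _ => Finset.sum_congr rfl fun j _ => by ring

/-- If `K̃ ≥ 0` is C² on the closed triangle `T` (with partial derivatives
`Kx, Ky, Kxy` existing within `T` and continuous on `T`) with the sign conditions
`∂ₓK̃ ≤ 0`, `∂ᵧK̃ ≥ 0`, `∂ₓᵧK̃ ≤ 0` on `D₋`, and `ψ : (0,1) → (0,∞)` is an arbitrary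
positive function, then the symmetric kernel
`K(x,y) = K̃(max(x,y), min(x,y)) / (ψ(x) ψ(y))` is semi-positive definite on `(0,1)`. -/
theorem statement2
    (Kt Kx Ky Kxy : ℝ → ℝ → ℝ)
    (hKc : ContinuousOn (fun p : ℝ × ℝ => Kt p.1 p.2) lowerTriangle)
    (hKxc : ContinuousOn (fun p : ℝ × ℝ => Kx p.1 p.2) lowerTriangle)
    (hKyc : ContinuousOn (fun p : ℝ × ℝ => Ky p.1 p.2) lowerTriangle)
    (hKxyc : ContinuousOn (fun p : ℝ × ℝ => Kxy p.1 p.2) lowerTriangle)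
    (hKx : ∀ x y : ℝ, (x, y) ∈ lowerTriangle →
      HasDerivWithinAt (fun x' => Kt x' y) (Kx x y) (Icc y 1) x)
    (hKy : ∀ x y : ℝ, (x, y) ∈ lowerTriangle →
      HasDerivWithinAt (fun y' => Kt x y') (Ky x y) (Icc 0 x) y)
    (hKxy : ∀ x y : ℝ, (x, y) ∈ lowerTriangle →
      HasDerivWithinAt (fun y' => Kx x y') (Kxy x y) (Icc 0 x) y)
    (hKnn : ∀ x y : ℝ, (x, y) ∈ lowerTriangle → 0 ≤ Kt x y)
    (hsx : ∀ x y : ℝ, (x, y) ∈ lowerTriangleOpen → Kx x y ≤ 0)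
    (hsy : ∀ x y : ℝ, (x, y) ∈ lowerTriangleOpen → 0 ≤ Ky x y)
    (hsxy : ∀ x y : ℝ, (x, y) ∈ lowerTriangleOpen → Kxy x y ≤ 0)
    (ψ : ℝ → ℝ) (hψ : ∀ x ∈ Ioo (0:ℝ) 1, 0 < ψ x)
    (m : ℕ) (t : Fin m → ℝ) (ht : ∀ i, t i ∈ Ioo (0:ℝ) 1) (c : Fin m → ℝ) :
    0 ≤ ∑ i : Fin m, ∑ j : Fin m,
      (Kt (max (t i) (t j)) (min (t i) (t j)) / (ψ (t i) * ψ (t j))) * c i * c j :=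
  statement2_general Kt Kx Ky Kxy hKx hKy hKxy hKnn hsx hsy hsxy ψ m t ht c
end

section
/- Let 0 < α < 1 and define K₁(x,y) = x^α (1−y)^α (x−y)^{−α} for (x,y) in D₋ = {(x,y) : 0 < y < x < 1}. Then K₁ satisfies ∂ₓK₁ ≤ 0, ∂ᵧK₁ ≥ 0 and ∂ₓᵧK₁ ≤ 0 at every point of D₋. -/
/-! The three derivatives have closed forms: a product of positive powers of `x`, `1 - y`,
`x - y` times `-α y`, `α (1 - x)` and `-α (x (1 - y) + α y (1 - x))` respectively, whose signs
are evident on `D₋` once `α ≥ 0`. -/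

open Real

section KernelDerivatives

variable {α x y : ℝ}

theorem hasDerivAt_kernel_fst (hx : 0 < x) (hyx : y < x) :
    HasDerivAt (fun x' => x' ^ α * (1 - y) ^ α * (x' - y) ^ (-α))
      (-(α * y * x ^ (α - 1) * (1 - y) ^ α * (x - y) ^ (-α - 1))) x := by
  have hs : 0 < x - y := sub_pos.2 hyx
  have hpow := (hasDerivAt_id x).rpow_const (p := α) (Or.inl hx.ne')
  have hsing := ((hasDerivAt_id x).sub_const y).rpow_const (p := -α) (Or.inl hs.ne')
  refine ((hpow.mul_const ((1 - y) ^ α)).mul hsing).congr_deriv ?_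
  simp only [id, rpow_sub_one hx.ne', rpow_sub_one hs.ne']
  field_simp
  ring

theorem hasDerivAt_kernel_snd (hy1 : y < 1) (hyx : y < x) :
    HasDerivAt (fun y' => x ^ α * (1 - y') ^ α * (x - y') ^ (-α))
      (α * (1 - x) * x ^ α * (1 - y) ^ (α - 1) * (x - y) ^ (-α - 1)) y := by
  have ht : 0 < 1 - y := sub_pos.2 hy1
  have hs : 0 < x - y := sub_pos.2 hyx
  have hpow := ((hasDerivAt_id y).const_sub 1).rpow_const (p := α) (Or.inl ht.ne')
  have hsing := ((hasDerivAt_id y).const_sub x).rpow_const (p := -α) (Or.inl hs.ne')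
  refine ((hpow.const_mul (x ^ α)).mul hsing).congr_deriv ?_
  simp only [id, rpow_sub_one ht.ne', rpow_sub_one hs.ne']
  field_simp
  ring

theorem hasDerivAt_kernel_fst_snd (hy1 : y < 1) (hyx : y < x) :
    HasDerivAt (fun y' => -(α * y' * x ^ (α - 1) * (1 - y') ^ α * (x - y') ^ (-α - 1)))
      (-(α * x ^ (α - 1) * (1 - y) ^ (α - 1) * (x - y) ^ (-α - 2) *
        (x * (1 - y) + α * y * (1 - x)))) y := by
  have ht : 0 < 1 - y := sub_pos.2 hy1
  have hs : 0 < x - y := sub_pos.2 hyx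
  have hpow := ((hasDerivAt_id y).const_sub 1).rpow_const (p := α) (Or.inl ht.ne')
  have hsing := ((hasDerivAt_id y).const_sub x).rpow_const (p := -α - 1) (Or.inl hs.ne')
  refine (((((hasDerivAt_id y).const_mul α).mul_const (x ^ (α - 1))).mul hpow).mul
    hsing).neg.congr_deriv ?_
  simp only [id, Pi.mul_apply, rpow_sub ht, rpow_sub hs, rpow_one, rpow_two]
  field_simp
  ring

end KernelDerivatives

theorem statement8_general (α : ℝ) (hα : 0 < α) :
    ∀ x y : ℝ, 0 < y → y < x → x < 1 →
      deriv (fun x' => x' ^ α * (1 - y) ^ α * (x' - y) ^ (-α)) x ≤ 0 ∧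
      0 ≤ deriv (fun y' => x ^ α * (1 - y') ^ α * (x - y') ^ (-α)) y ∧
      deriv (fun y' =>
        deriv (fun x' => x' ^ α * (1 - y') ^ α * (x' - y') ^ (-α)) x) y ≤ 0 := by
  intro x y hy hyx hx1
  have hx : 0 < x := hy.trans hyx
  have hy1 : y < 1 := hyx.trans hx1
  have hderiv_fst : (fun y' => deriv (fun x' => x' ^ α * (1 - y') ^ α * (x' - y') ^ (-α)) x)
      =ᶠ[nhds y] fun y' => -(α * y' * x ^ (α - 1) * (1 - y') ^ α * (x - y') ^ (-α - 1)) := by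
    filter_upwards [Iio_mem_nhds hyx] with y' hy'
    exact (hasDerivAt_kernel_fst hx hy').deriv
  refine ⟨?_, ?_, ?_⟩
  · rw [(hasDerivAt_kernel_fst hx hyx).deriv]
    exact neg_nonpos.2 (by bound)
  · rw [(hasDerivAt_kernel_snd hy1 hyx).deriv]
    bound
  · rw [hderiv_fst.deriv_eq, (hasDerivAt_kernel_fst_snd hy1 hyx).deriv]
    exact neg_nonpos.2 (by bound)

/-- For `0 < α < 1`, the kernel `K₁(x,y) = x^α (1-y)^α (x-y)^{-α}` satisfies
`∂ₓK₁ ≤ 0`, `∂ᵧK₁ ≥ 0` and `∂ₓᵧK₁ ≤ 0` on `D₋ = {0 < y < x < 1}`. -/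
theorem statement8 (α : ℝ) (hα : 0 < α) (hα1 : α < 1) :
    ∀ x y : ℝ, 0 < y → y < x → x < 1 →
      deriv (fun x' => x' ^ α * (1 - y) ^ α * (x' - y) ^ (-α)) x ≤ 0 ∧
      0 ≤ deriv (fun y' => x ^ α * (1 - y') ^ α * (x - y') ^ (-α)) y ∧
      deriv (fun y' =>
        deriv (fun x' => x' ^ α * (1 - y') ^ α * (x' - y') ^ (-α)) x) y ≤ 0 :=
  statement8_general α hα
end

section
/- For any real numbers t₁, …, t_m in (0,1) and any reals c₁, …, c_m, one has ∑_{i=1}^m ∑_{j=1}^m (min(t_i,t_j)/max(t_i,t_j)) · ((1−max(t_i,t_j))/(1−min(t_i,t_j))) c_i c_j ≥ 0; that is, the kernel (s,τ) ↦ (min(s,τ)/max(s,τ)) · ((1−max(s,τ))/(1−min(s,τ))) is positive semidefinite on (0,1)². -/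
/-!
With the odds `o(s) = s / (1 - s)`, increasing on `(0,1)`, the kernel equals
`min (o s) (o τ) / max (o s) (o τ) = min (o s) (o τ) * min (o s)⁻¹ (o τ)⁻¹`.
The kernel `min` on nonnegative reals is positive semidefinite, being the Gram matrix of the
indicators of `[0, u]` in `L²(ℝ)`, so the Schur product theorem concludes.
-/

open Set MeasureTheory
open scoped Matrix

theorem min_div_max_eq_min_mul_min_inv {x y : ℝ} (hx : 0 < x) (hy : 0 < y) :
    min x y / max x y = min x y * min x⁻¹ y⁻¹ := by
  rcases le_total x y with h | h
  · rw [max_eq_right h, min_eq_right (inv_anti₀ hx h), div_eq_mul_inv]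
  · rw [max_eq_left h, min_eq_left (inv_anti₀ hy h), div_eq_mul_inv]

theorem monotoneOn_div_one_sub : MonotoneOn (fun s : ℝ => s / (1 - s)) (Iio 1) := by
  intro a ha b hb hab
  rw [mem_Iio] at ha hb
  rw [div_le_div_iff₀ (sub_pos.2 ha) (sub_pos.2 hb)]
  nlinarith

theorem min_div_max_mul_one_sub_div_eq {s τ : ℝ} (hs : s ∈ Ioo 0 1) (hτ : τ ∈ Ioo 0 1) :
    min s τ / max s τ * ((1 - max s τ) / (1 - min s τ)) =
      min (s / (1 - s)) (τ / (1 - τ)) / max (s / (1 - s)) (τ / (1 - τ)) := by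
  rw [← monotoneOn_div_one_sub.map_min hs.2 hτ.2, ← monotoneOn_div_one_sub.map_max hs.2 hτ.2]
  have hmin_le_max : min s τ ≤ max s τ := min_le_max
  have hmin_pos : 0 < min s τ := lt_min hs.1 hτ.1
  have hmax_lt : max s τ < 1 := max_lt hs.2 hτ.2
  have : 0 < 1 - min s τ := by linarith
  have : 0 < 1 - max s τ := by linarith
  have : 0 < max s τ := by linarith
  field_simp

namespace Matrix

variable {ι : Type*}

theorem posSemidef_min [Finite ι] (u : ι → ℝ) (hu : ∀ i, 0 ≤ u i) :
    (of fun i j => min (u i) (u j)).PosSemidef := by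
  have hvol : (of fun i j => min (u i) (u j)) =
      of fun i j => volume.real (Icc 0 (u i) ∩ Icc 0 (u j)) := by
    ext i j
    simp [Icc_inter_Icc, hu i, hu j]
  rw [hvol]
  exact posSemidef_matrix_measure_inter (fun _ => measurableSet_Icc)
    (fun _ => isCompact_Icc.measure_ne_top)

theorem posSemidef_min_div_max [Finite ι] (u : ι → ℝ) (hu : ∀ i, 0 < u i) :
    (of fun i j => min (u i) (u j) / max (u i) (u j)).PosSemidef := by
  have hschur : (of fun i j => min (u i) (u j) / max (u i) (u j)) =
      (of fun i j => min (u i) (u j)) ⊙ (of fun i j => min (u i)⁻¹ (u j)⁻¹) := by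
    ext i j
    exact min_div_max_eq_min_mul_min_inv (hu i) (hu j)
  rw [hschur]
  exact (posSemidef_min u fun i => (hu i).le).hadamard
    (posSemidef_min (fun i => (u i)⁻¹) fun i => (inv_pos.2 (hu i)).le)

theorem PosSemidef.sum_sum_mul_mul_nonneg [Fintype ι] {M : Matrix ι ι ℝ} (hM : M.PosSemidef)
    (c : ι → ℝ) : 0 ≤ ∑ i, ∑ j, M i j * c i * c j := by
  simpa [dotProduct, mulVec, Finset.mul_sum, mul_comm, mul_left_comm] using
    hM.dotProduct_mulVec_nonneg c

end Matrix

/-- The kernel `(s,τ) ↦ (min(s,τ)/max(s,τ)) · ((1-max(s,τ))/(1-min(s,τ)))` is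
positive semidefinite on `(0,1)²`. -/
theorem statement12 (m : ℕ) (t : Fin m → ℝ) (ht : ∀ i, t i ∈ Ioo (0:ℝ) 1) (c : Fin m → ℝ) :
    0 ≤ ∑ i : Fin m, ∑ j : Fin m,
      (min (t i) (t j) / max (t i) (t j)) *
        ((1 - max (t i) (t j)) / (1 - min (t i) (t j))) * c i * c j := by
  have hodds_pos : ∀ i, 0 < t i / (1 - t i) := fun i => div_pos (ht i).1 (sub_pos.2 (ht i).2)
  simpa only [Matrix.of_apply, ← min_div_max_mul_one_sub_div_eq (ht _) (ht _)] using
    (Matrix.posSemidef_min_div_max _ hodds_pos).sum_sum_mul_mul_nonneg c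
end

section
/- For every u ∈ C_c^∞((0,1)), one has ∫₀¹ ∫₀ˢ (τ/s) u(τ) u(s) dτ ds ≥ 0. -/
open MeasureTheory Set intervalIntegral

/-- For every `u ∈ C_c^∞((0,1))`, `∫₀¹ ∫₀ˢ (τ/s) u(τ) u(s) dτ ds ≥ 0`. -/
theorem statement14 (u : ℝ → ℝ) (hu : ContDiff ℝ (⊤ : ℕ∞) u) (hus : tsupport u ⊆ Ioo 0 1) :
    0 ≤ ∫ s in (0:ℝ)..1, ∫ τ in (0:ℝ)..s, (τ / s) * u τ * u s := by
  have hcu : Continuous u := hu.continuous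
  -- find ε > 0 with u = 0 on (-∞, ε]
  obtain ⟨ε, hε0, hε1, hεu⟩ : ∃ ε : ℝ, 0 < ε ∧ ε < 1 ∧ ∀ s ≤ ε, u s = 0 := by
    have h0 : (0:ℝ) ∉ tsupport u := fun h => absurd (hus h).1 (lt_irrefl 0)
    obtain ⟨δ, hδ0, hδ⟩ :=
      Metric.isOpen_iff.1 (isClosed_tsupport u).isOpen_compl 0 h0
    refine ⟨min (δ/2) (1/2), by positivity,
      lt_of_le_of_lt (min_le_right _ _) (by norm_num), ?_⟩
    intro s hs
    by_cases hs0 : s ≤ 0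
    · exact image_eq_zero_of_notMem_tsupport fun h => absurd (hus h).1 (not_lt.2 hs0)
    · push_neg at hs0
      refine image_eq_zero_of_notMem_tsupport fun h => hδ ?_ h
      rw [Metric.mem_ball, Real.dist_eq, sub_zero, abs_of_pos hs0]
      calc s ≤ min (δ/2) (1/2) := hs
        _ ≤ δ/2 := min_le_left _ _
        _ < δ := by linarith
  set F : ℝ → ℝ := fun s => ∫ τ in (0:ℝ)..s, τ * u τ with hFdef
  have hf : Continuous fun τ : ℝ => τ * u τ := continuous_id.mul hcu
  have hFderiv : ∀ s : ℝ, HasDerivAt F (s * u s) s := fun s =>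
    (hf.integral_hasStrictDerivAt 0 s).hasDerivAt
  have hFcont : Continuous F :=
    continuous_iff_continuousAt.2 fun s => (hFderiv s).continuousAt
  have key : ∀ s : ℝ, (∫ τ in (0:ℝ)..s, (τ / s) * u τ * u s) = u s * F s / s := by
    intro s
    rcases eq_or_ne s 0 with rfl | hs
    · simp
    · have h1 : ∀ τ : ℝ, (τ / s) * u τ * u s = (u s / s) * (τ * u τ) := by
        intro τ; field_simp
      simp_rw [h1, intervalIntegral.integral_const_mul]
      rw [hFdef]; ring
  have hgoal : (∫ s in (0:ℝ)..1, ∫ τ in (0:ℝ)..s, (τ / s) * u τ * u s)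
      = ∫ s in (0:ℝ)..1, u s * F s / s := by
    simp_rw [key]
  rw [hgoal]
  -- the integrand is continuous
  have hh : Continuous (fun s => u s * F s / s) := by
    rw [continuous_iff_continuousAt]
    intro s
    rcases eq_or_ne s 0 with rfl | hs
    · have hev : (fun s => u s * F s / s) =ᶠ[nhds (0:ℝ)] fun _ => 0 := by
        filter_upwards [Iio_mem_nhds hε0] with t ht
        simp [hεu t (le_of_lt ht)]
      exact hev.continuousAt
    · exact (hcu.continuousAt.mul hFcont.continuousAt).div continuousAt_id hs
  -- split the integral at ε
  have hsplit : (∫ s in (0:ℝ)..1, u s * F s / s)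
      = (∫ s in (0:ℝ)..ε, u s * F s / s) + ∫ s in ε..1, u s * F s / s :=
    (intervalIntegral.integral_add_adjacent_intervals
      (hh.intervalIntegrable 0 ε) (hh.intervalIntegrable ε 1)).symm
  have hfirst : (∫ s in (0:ℝ)..ε, u s * F s / s) = 0 := by
    rw [intervalIntegral.integral_congr (g := fun _ => (0:ℝ))
      (fun s hs => by
        rw [uIcc_of_le hε0.le] at hs
        simp [hεu s hs.2])]
    simp
  -- the function G and its derivative on [ε,1]
  set G : ℝ → ℝ := fun s => F s ^ 2 / (2 * s ^ 2) with hGdef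
  have hFε : F ε = 0 := by
    have h0 : (∫ τ in (0:ℝ)..ε, τ * u τ) = 0 := by
      rw [intervalIntegral.integral_congr (g := fun _ => (0:ℝ))
        (fun τ hτ => by
          rw [uIcc_of_le hε0.le] at hτ
          simp [hεu τ hτ.2])]
      simp
    exact h0
  have hG : ∀ s ∈ uIcc ε 1, HasDerivAt G (u s * F s / s - F s ^ 2 / s ^ 3) s := by
    intro s hs
    rw [uIcc_of_le hε1.le] at hs
    have hs0 : s ≠ 0 := (lt_of_lt_of_le hε0 hs.1).ne'
    have h1 : HasDerivAt (fun s => F s ^ 2) (2 * F s ^ 1 * (s * u s)) s := by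
      have := (hFderiv s).pow 2
      exact this.congr_deriv (by simp)
    have h2 : HasDerivAt (fun s : ℝ => 2 * s ^ 2) (2 * (2 * s ^ 1)) s := by
      have := (hasDerivAt_pow 2 s).const_mul (2:ℝ)
      simpa using this
    have hd := h1.div h2 (by simpa using pow_ne_zero 2 hs0)
    refine hd.congr_deriv ?_
    field_simp
  have hφcont : ContinuousOn (fun s => u s * F s / s - F s ^ 2 / s ^ 3) (uIcc ε 1) := by
    intro s hs
    rw [uIcc_of_le hε1.le] at hs
    have hs0 : s ≠ 0 := (lt_of_lt_of_le hε0 hs.1).ne'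
    exact (((hcu.continuousAt.mul hFcont.continuousAt).div continuousAt_id hs0).sub
      ((hFcont.continuousAt.pow 2).div (continuousAt_id.pow 3)
        (pow_ne_zero 3 hs0))).continuousWithinAt
  have hψcont : ContinuousOn (fun s => F s ^ 2 / s ^ 3) (uIcc ε 1) := by
    intro s hs
    rw [uIcc_of_le hε1.le] at hs
    have hs0 : s ≠ 0 := (lt_of_lt_of_le hε0 hs.1).ne'
    exact ((hFcont.continuousAt.pow 2).div (continuousAt_id.pow 3)
      (pow_ne_zero 3 hs0)).continuousWithinAt
  have hφint : IntervalIntegrable (fun s => u s * F s / s - F s ^ 2 / s ^ 3) volume ε 1 :=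
    hφcont.intervalIntegrable
  have hψint : IntervalIntegrable (fun s => F s ^ 2 / s ^ 3) volume ε 1 :=
    hψcont.intervalIntegrable
  have hsecond : (∫ s in ε..1, u s * F s / s)
      = (∫ s in ε..1, (u s * F s / s - F s ^ 2 / s ^ 3)) + ∫ s in ε..1, F s ^ 2 / s ^ 3 := by
    rw [← intervalIntegral.integral_add hφint hψint]
    congr 1
    funext s
    ring
  have hFTC : (∫ s in ε..1, (u s * F s / s - F s ^ 2 / s ^ 3)) = G 1 - G ε :=
    intervalIntegral.integral_eq_sub_of_hasDerivAt hG hφint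
  have hGε : G ε = 0 := by rw [hGdef]; simp [hFε]
  have hG1 : 0 ≤ G 1 := by rw [hGdef]; positivity
  have hψnonneg : 0 ≤ ∫ s in ε..1, F s ^ 2 / s ^ 3 := by
    apply intervalIntegral.integral_nonneg hε1.le
    intro s hs
    have hs0 : 0 < s := lt_of_lt_of_le hε0 hs.1
    positivity
  rw [hsplit, hfirst, hsecond, hFTC, hGε]
  linarith
end

section
/- Let φ : (0,1) → (0,∞) and A : (0,1) → (0,∞) be C¹ functions such that the derivative of s ↦ φ(s) A(s) is nonnegative on (0,1). Then for every u ∈ C_c^∞((0,1)), ∫₀¹ ∫₀ˢ (φ(τ)/A(s)) u(τ) u(s) dτ ds ≥ 0. -/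
open MeasureTheory Set intervalIntegral

-- auxiliary: product with a function supported in Ioo 0 1 is continuous
lemma aux_cont {u v : ℝ → ℝ} (hu : Continuous u) (hus : tsupport u ⊆ Ioo 0 1)
    (hv : ContinuousOn v (Ioo 0 1)) : Continuous fun s => u s * v s := by
  rw [continuous_iff_continuousAt]
  intro x
  by_cases hx : x ∈ Ioo (0:ℝ) 1
  · exact hu.continuousAt.mul (hv.continuousAt (isOpen_Ioo.mem_nhds hx))
  · have hx' : x ∉ tsupport u := fun h => hx (hus h)
    have h0 : (fun s => u s * v s) =ᶠ[nhds x] (fun _ => 0) := by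
      filter_upwards [(isClosed_tsupport u).isOpen_compl.mem_nhds hx'] with y hy
      simp [image_eq_zero_of_notMem_tsupport hy]
    exact continuousAt_const.congr h0.symm

/-- If `φ, A : (0,1) → (0,∞)` are C¹ with `(φ A)' ≥ 0` on `(0,1)`, then for every
`u ∈ C_c^∞((0,1))`, `∫₀¹ ∫₀ˢ (φ(τ)/A(s)) u(τ) u(s) dτ ds ≥ 0`. -/
theorem statement15 (φ A : ℝ → ℝ)
    (hφ : ContDiffOn ℝ 1 φ (Ioo 0 1)) (hA : ContDiffOn ℝ 1 A (Ioo 0 1))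
    (hφpos : ∀ s ∈ Ioo (0:ℝ) 1, 0 < φ s) (hApos : ∀ s ∈ Ioo (0:ℝ) 1, 0 < A s)
    (hmono : ∀ s ∈ Ioo (0:ℝ) 1, 0 ≤ deriv (fun s' => φ s' * A s') s)
    (u : ℝ → ℝ) (hu : ContDiff ℝ (⊤ : ℕ∞) u) (hus : tsupport u ⊆ Ioo 0 1) :
    0 ≤ ∫ s in (0:ℝ)..1, ∫ τ in (0:ℝ)..s, (φ τ / A s) * u τ * u s := by
  -- trivial case: u ≡ 0
  by_cases hK : tsupport u = ∅
  · have hu0 : u = 0 := by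
      funext x
      exact image_eq_zero_of_notMem_tsupport (by simp [hK])
    simp [hu0]
  -- support bounds
  set K := tsupport u with hKdef
  have hKcl : IsClosed K := isClosed_tsupport u
  have hKcp : IsCompact K :=
    IsCompact.of_isClosed_subset isCompact_Icc hKcl (hus.trans Ioo_subset_Icc_self)
  have hKne : K.Nonempty := nonempty_iff_ne_empty.mpr hK
  set a := sInf K with ha
  set b := sSup K with hb
  have haK : a ∈ K := hKcl.csInf_mem hKne hKcp.bddBelow
  have hbK : b ∈ K := hKcl.csSup_mem hKne hKcp.bddAbove
  have haI : a ∈ Ioo (0:ℝ) 1 := hus haK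
  have hbI : b ∈ Ioo (0:ℝ) 1 := hus hbK
  have hKab : K ⊆ Icc a b := fun x hx => ⟨csInf_le hKcp.bddBelow hx, le_csSup hKcp.bddAbove hx⟩
  set c := a / 2 with hc
  set d := (b + 1) / 2 with hd
  have hc0 : 0 < c := by simp only [hc]; linarith [haI.1]
  have hca : c < a := by linarith [haI.1]
  have hbd : b < d := by linarith [hbI.2]
  have hd1 : d < 1 := by linarith [hbI.2]
  have hab : a ≤ b := csInf_le_csSup hKne hKcp.bddBelow hKcp.bddAbove
  have hcd : c ≤ d := by linarith
  have hcdI : Icc c d ⊆ Ioo (0:ℝ) 1 := fun x hx => ⟨lt_of_lt_of_le hc0 hx.1, lt_of_le_of_lt hx.2 hd1⟩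
  -- u vanishes outside [a,b]
  have hu_out : ∀ x, x ∉ Icc a b → u x = 0 := by
    intro x hx
    exact image_eq_zero_of_notMem_tsupport (fun h => hx (hKab h))
  -- w = u * φ continuous
  set w : ℝ → ℝ := fun τ => u τ * φ τ with hw
  have hwc : Continuous w := aux_cont hu.continuous hus hφ.continuousOn
  -- F antiderivative of w
  set F : ℝ → ℝ := fun s => ∫ τ in (0:ℝ)..s, w τ with hF
  have hFder : ∀ s : ℝ, HasDerivAt F (w s) s := fun s =>
    intervalIntegral.integral_hasDerivAt_right (hwc.intervalIntegrable _ _)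
      (hwc.stronglyMeasurableAtFilter _ _) hwc.continuousAt
  have hFc : Continuous F := by
    exact Differentiable.continuous (fun s => (hFder s).differentiableAt)
  -- rewrite inner integral
  have hinner : ∀ s : ℝ, (∫ τ in (0:ℝ)..s, (φ τ / A s) * u τ * u s)
      = u s * (F s / A s) := by
    intro s
    have : ∀ τ, (φ τ / A s) * u τ * u s = (u s / A s) * w τ := by
      intro τ; simp only [hw]; ring
    rw [intervalIntegral.integral_congr (fun τ _ => this τ),
      intervalIntegral.integral_const_mul]
    simp only [hF]; ring
  set h : ℝ → ℝ := fun s => u s * (F s / A s) with hh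
  have hhc : Continuous h :=
    aux_cont hu.continuous hus ((hFc.continuousOn).div hA.continuousOn
      (fun x hx => (hApos x hx).ne'))
  have hgoal : (∫ s in (0:ℝ)..1, ∫ τ in (0:ℝ)..s, (φ τ / A s) * u τ * u s)
      = ∫ s in (0:ℝ)..1, h s :=
    intervalIntegral.integral_congr (fun s _ => hinner s)
  rw [hgoal]
  -- split the integral
  have hint : ∀ x y : ℝ, IntervalIntegrable h volume x y := fun x y => hhc.intervalIntegrable x y
  have hsplit : (∫ s in (0:ℝ)..1, h s) = (∫ s in (0:ℝ)..c, h s) + (∫ s in c..d, h s)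
      + (∫ s in d..(1:ℝ), h s) := by
    rw [intervalIntegral.integral_add_adjacent_intervals (hint 0 c) (hint c d),
      intervalIntegral.integral_add_adjacent_intervals (hint 0 d) (hint d 1)]
  have hzero1 : (∫ s in (0:ℝ)..c, h s) = 0 := by
    rw [intervalIntegral.integral_congr (g := fun _ => (0:ℝ)) ?_, intervalIntegral.integral_zero]
    intro s hs
    rw [uIcc_of_le hc0.le] at hs
    have : u s = 0 := hu_out s (fun hmem => absurd (le_trans hmem.1 hs.2) (not_le.mpr hca))
    simp [hh, this]
  have hzero2 : (∫ s in d..(1:ℝ), h s) = 0 := by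
    rw [intervalIntegral.integral_congr (g := fun _ => (0:ℝ)) ?_, intervalIntegral.integral_zero]
    intro s hs
    rw [uIcc_of_le hd1.le] at hs
    have : u s = 0 := hu_out s (fun hmem => absurd (le_trans hs.1 hmem.2) (not_le.mpr hbd))
    simp [hh, this]
  rw [hsplit, hzero1, hzero2, zero_add, add_zero]
  -- main part: integration by parts on [c,d]
  set P : ℝ → ℝ := fun s => φ s * A s with hP
  have hPcd : ContDiffOn ℝ 1 P (Ioo 0 1) := hφ.mul hA
  have hPpos : ∀ s ∈ Ioo (0:ℝ) 1, 0 < P s := fun s hs => mul_pos (hφpos s hs) (hApos s hs)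
  have hPder : ∀ s ∈ Ioo (0:ℝ) 1, HasDerivAt P (deriv P s) s := by
    intro s hs
    exact ((hPcd.differentiableOn one_ne_zero).differentiableAt (isOpen_Ioo.mem_nhds hs)).hasDerivAt
  have hderivPcont : ContinuousOn (deriv P) (Ioo 0 1) := by
    have := hPcd.continuousOn_derivWithin isOpen_Ioo.uniqueDiffOn le_rfl
    refine this.congr ?_
    intro x hx
    exact (derivWithin_of_isOpen isOpen_Ioo hx).symm
  -- G = F^2/2 * P⁻¹
  set q : ℝ → ℝ := fun s => F s ^ 2 / 2 * (deriv P s / (P s) ^ 2) with hq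
  set G : ℝ → ℝ := fun s => F s ^ 2 / 2 * (P s)⁻¹ with hG
  have hGder : ∀ s ∈ Ioo (0:ℝ) 1, HasDerivAt G (h s - q s) s := by
    intro s hs
    have h1 : HasDerivAt (fun s => F s ^ 2 / 2) (F s * w s) s := by
      have h0 := ((hFder s).pow 2).div_const 2
      refine h0.congr_deriv ?_
      ring
    have h2 : HasDerivAt (fun s => (P s)⁻¹) (-(deriv P s) / (P s) ^ 2) s :=
      (hPder s hs).inv (hPpos s hs).ne'
    have := h1.mul h2
    refine this.congr_deriv ?_
    have hφne : φ s ≠ 0 := (hφpos s hs).ne'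
    have hAne : A s ≠ 0 := (hApos s hs).ne'
    simp only [hh, hq, hw, hP]
    field_simp
    ring
  have hibp : (∫ s in c..d, h s - q s) = G d - G c := by
    apply intervalIntegral.integral_eq_sub_of_hasDerivAt
    · intro x hx
      rw [uIcc_of_le hcd] at hx
      exact hGder x (hcdI hx)
    · apply IntervalIntegrable.sub (hint c d)
      apply ContinuousOn.intervalIntegrable
      rw [uIcc_of_le hcd]
      apply ContinuousOn.mul ((hFc.pow 2).continuousOn.div_const 2)
      exact (hderivPcont.mono hcdI).div
        (((hφ.continuousOn.mono hcdI).mul (hA.continuousOn.mono hcdI)).pow 2)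
        (fun x hx => pow_ne_zero 2 (hPpos x (hcdI hx)).ne')
  have hqint : IntervalIntegrable q volume c d := by
    apply ContinuousOn.intervalIntegrable
    rw [uIcc_of_le hcd]
    apply ContinuousOn.mul ((hFc.pow 2).continuousOn.div_const 2)
    exact (hderivPcont.mono hcdI).div
      (((hφ.continuousOn.mono hcdI).mul (hA.continuousOn.mono hcdI)).pow 2)
      (fun x hx => pow_ne_zero 2 (hPpos x (hcdI hx)).ne')
  have hsub : (∫ s in c..d, h s - q s) = (∫ s in c..d, h s) - ∫ s in c..d, q s :=
    intervalIntegral.integral_sub (hint c d) hqint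
  have hGc : G c = 0 := by
    have hFc0 : F c = 0 := by
      show (∫ τ in (0:ℝ)..c, w τ) = 0
      rw [intervalIntegral.integral_congr (g := fun _ => (0:ℝ)) ?_, intervalIntegral.integral_zero]
      intro τ hτ
      rw [uIcc_of_le hc0.le] at hτ
      have : u τ = 0 := hu_out τ (fun hmem => absurd (le_trans hmem.1 hτ.2) (not_le.mpr hca))
      simp [hw, this]
    simp [hG, hFc0]
  have hGd : 0 ≤ G d := by
    have hdI : d ∈ Ioo (0:ℝ) 1 := ⟨lt_of_lt_of_le hc0 hcd, hd1⟩
    have := hPpos d hdI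
    simp only [hG]
    positivity
  have hqnn : 0 ≤ ∫ s in c..d, q s := by
    apply intervalIntegral.integral_nonneg hcd
    intro x hx
    have hxI := hcdI hx
    have h1 := hmono x hxI
    have h2 := hPpos x hxI
    simp only [hq]
    have : 0 ≤ deriv P x := h1
    positivity
  have : (∫ s in c..d, h s) = G d - G c + ∫ s in c..d, q s := by
    rw [← hibp, hsub]; ring
  rw [this, hGc]
  linarith
end

section
/- Let f : [0,∞) → ℝ be a C² function with f integrable on (0,∞), f′ ≤ 0, f″ ≥ 0 on (0,∞), and f(x) → 0 and f′(x) → 0 as x → ∞. Then for every ξ > 0, ∫₀^∞ f(x) cos(ξx) dx = (1/ξ²) ∫₀^∞ f″(x) (1 − cos(ξx)) dx, and in particular ∫₀^∞ f(x) cos(ξx) dx ≥ 0. -/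
open MeasureTheory Set Filter Real

/-! Differentiating `polyaPrimitive f f' ξ` gives `f(x) cos(ξx) - ξ⁻² f''(x) (1 - cos(ξx))`,
and the primitive vanishes at `0` and at `∞`; this performs both integrations by parts at once.
Convexity then makes the right-hand integrand nonnegative. -/

theorem abs_one_sub_cos_le_two (x : ℝ) : |1 - cos x| ≤ 2 := by
  rw [abs_le]
  constructor <;> linarith [neg_one_le_cos x, cos_le_one x]

theorem ContDiffOn.hasDerivAt_derivWithin_Ici {f : ℝ → ℝ} {a x : ℝ}
    (hf : ContDiffOn ℝ 2 f (Ici a)) (hx : a < x) :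
    HasDerivAt (derivWithin f (Ici a)) (deriv (deriv f) x) x := by
  have hopen : ContDiffOn ℝ 2 f (Ioi a) := hf.mono Ioi_subset_Ici_self
  have hderiv : ContDiffOn ℝ 1 (deriv f) (Ioi a) :=
    hopen.deriv_of_isOpen isOpen_Ioi (by norm_num)
  refine (((hderiv.differentiableOn one_ne_zero).differentiableAt
    (Ioi_mem_nhds hx)).hasDerivAt).congr_of_eventuallyEq ?_
  filter_upwards [Ioi_mem_nhds hx] with y hy using derivWithin_of_mem_nhds (Ici_mem_nhds hy)

section CosineTransform

variable {f g f'' : ℝ → ℝ} {ξ : ℝ}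

theorem MeasureTheory.IntegrableOn.mul_cos_mul {s : Set ℝ} (hf : IntegrableOn f s) :
    IntegrableOn (fun x ↦ f x * cos (ξ * x)) s :=
  Integrable.mul_bdd (c := 1) hf (by fun_prop)
    (ae_of_all _ fun x ↦ by simpa using abs_cos_le_one _)

theorem MeasureTheory.IntegrableOn.mul_one_sub_cos_mul {s : Set ℝ} (hf : IntegrableOn f s) :
    IntegrableOn (fun x ↦ f x * (1 - cos (ξ * x))) s :=
  Integrable.mul_bdd (c := 2) hf (by fun_prop) (ae_of_all _ fun x ↦ abs_one_sub_cos_le_two _)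

noncomputable def polyaPrimitive (f g : ℝ → ℝ) (ξ x : ℝ) : ℝ :=
  f x * (sin (ξ * x) / ξ) + g x * ((cos (ξ * x) - 1) / ξ ^ 2)

@[simp]
theorem polyaPrimitive_zero : polyaPrimitive f g ξ 0 = 0 := by
  simp [polyaPrimitive]

theorem hasDerivAt_polyaPrimitive {x g'' : ℝ} (hξ : ξ ≠ 0) (hf : HasDerivAt f (g x) x)
    (hg : HasDerivAt g g'' x) :
    HasDerivAt (polyaPrimitive f g ξ)
      (f x * cos (ξ * x) - 1 / ξ ^ 2 * (g'' * (1 - cos (ξ * x)))) x := by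
  have hlin : HasDerivAt (fun y ↦ ξ * y) ξ x := by simpa using (hasDerivAt_id x).const_mul ξ
  have hsin := hlin.sin.div_const ξ
  have hcos := (hlin.cos.sub_const 1).div_const (ξ ^ 2)
  refine ((hf.mul hsin).add (hg.mul hcos)).congr_deriv ?_
  field_simp
  ring

theorem ContinuousWithinAt.polyaPrimitive {s : Set ℝ} {x : ℝ} (hf : ContinuousWithinAt f s x)
    (hg : ContinuousWithinAt g s x) : ContinuousWithinAt (polyaPrimitive f g ξ) s x :=
  (hf.mul (by fun_prop)).add (hg.mul (by fun_prop))

theorem Filter.Tendsto.polyaPrimitive {l : Filter ℝ} (hf : Tendsto f l (nhds 0))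
    (hg : Tendsto g l (nhds 0)) : Tendsto (polyaPrimitive f g ξ) l (nhds 0) := by
  have hsin : Tendsto (fun x ↦ f x * (sin (ξ * x) / ξ)) l (nhds 0) := by
    refine hf.zero_mul_isBoundedUnder_le (isBoundedUnder_of ⟨1 / |ξ|, fun x ↦ ?_⟩)
    simp only [Function.comp, norm_eq_abs, abs_div]
    gcongr
    exact abs_sin_le_one _
  have hcos : Tendsto (fun x ↦ g x * ((cos (ξ * x) - 1) / ξ ^ 2)) l (nhds 0) := by
    refine hg.zero_mul_isBoundedUnder_le (isBoundedUnder_of ⟨2 / |ξ ^ 2|, fun x ↦ ?_⟩)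
    simp only [Function.comp, norm_eq_abs, abs_div]
    gcongr
    exact abs_sub_comm (cos _) 1 ▸ abs_one_sub_cos_le_two _
  rw [← add_zero 0]
  exact hsin.add hcos

theorem integral_Ioi_mul_cos_eq (hξ : ξ ≠ 0)
    (hf0 : ContinuousWithinAt f (Ici 0) 0) (hg0 : ContinuousWithinAt g (Ici 0) 0)
    (hf : ∀ x ∈ Ioi 0, HasDerivAt f (g x) x) (hg : ∀ x ∈ Ioi 0, HasDerivAt g (f'' x) x)
    (hf_int : IntegrableOn f (Ioi 0)) (hf''_int : IntegrableOn f'' (Ioi 0))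
    (hf_top : Tendsto f atTop (nhds 0)) (hg_top : Tendsto g atTop (nhds 0)) :
    ∫ x in Ioi 0, f x * cos (ξ * x) =
      1 / ξ ^ 2 * ∫ x in Ioi 0, f'' x * (1 - cos (ξ * x)) := by
  have hint := hf''_int.mul_one_sub_cos_mul (ξ := ξ)
  have hdiff := integral_Ioi_of_hasDerivAt_of_tendsto (hf0.polyaPrimitive hg0)
    (fun x hx ↦ hasDerivAt_polyaPrimitive hξ (hf x hx) (hg x hx))
    (hf_int.mul_cos_mul.sub (hint.const_mul _)) (hf_top.polyaPrimitive hg_top)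
  rw [integral_sub hf_int.mul_cos_mul (hint.const_mul _), integral_const_mul] at hdiff
  simpa [sub_eq_zero] using hdiff

end CosineTransform

theorem statement19_general (f : ℝ → ℝ)
    (hf : ContDiffOn ℝ 2 f (Ici 0))
    (hint : IntegrableOn f (Ioi 0))
    (hf'' : ∀ x : ℝ, 0 < x → 0 ≤ deriv (deriv f) x)
    (hf0 : Tendsto f atTop (nhds 0))
    (hf'0 : Tendsto (deriv f) atTop (nhds 0)) :
    ∀ ξ : ℝ, 0 < ξ →
      (∫ x in Ioi (0:ℝ), f x * Real.cos (ξ * x))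
          = (1 / ξ ^ 2) * ∫ x in Ioi (0:ℝ), deriv (deriv f) x * (1 - Real.cos (ξ * x)) ∧
        0 ≤ ∫ x in Ioi (0:ℝ), f x * Real.cos (ξ * x) := by
  -- `deriv f 0` is a junk value; the one-sided derivative is continuous up to `0`.
  set g := derivWithin f (Ici 0)
  have hg_eq : ∀ x ∈ Ioi (0 : ℝ), g x = deriv f x :=
    fun x hx ↦ derivWithin_of_mem_nhds (Ici_mem_nhds hx)
  have hf_deriv : ∀ x ∈ Ioi (0 : ℝ), HasDerivAt f (g x) x := fun x hx ↦ by
    rw [hg_eq x hx]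
    exact ((hf.differentiableOn two_ne_zero).differentiableAt (Ici_mem_nhds hx)).hasDerivAt
  have hg_deriv : ∀ x ∈ Ioi (0 : ℝ), HasDerivAt g (deriv (deriv f) x) x :=
    fun x hx ↦ hf.hasDerivAt_derivWithin_Ici hx
  have hg0 : ContinuousWithinAt g (Ici 0) 0 :=
    hf.continuousOn_derivWithin (uniqueDiffOn_Ici 0) one_le_two 0 self_mem_Ici
  have hg_top : Tendsto g atTop (nhds 0) :=
    hf'0.congr' (eventually_gt_atTop 0 |>.mono fun x hx ↦ (hg_eq x hx).symm)
  have hf''_int : IntegrableOn (deriv (deriv f)) (Ioi 0) :=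
    integrableOn_Ioi_deriv_of_nonneg hg0 hg_deriv hf'' hg_top
  intro ξ hξ
  have heq := integral_Ioi_mul_cos_eq hξ.ne' (hf.continuousOn 0 self_mem_Ici) hg0 hf_deriv
    hg_deriv hint hf''_int hf0 hg_top
  refine ⟨heq, heq ▸ mul_nonneg (by positivity) (setIntegral_nonneg measurableSet_Ioi ?_)⟩
  exact fun x hx ↦ mul_nonneg (hf'' x hx) (sub_nonneg.2 (cos_le_one _))

/-- Pólya-type positivity: if `f : [0,∞) → ℝ` is C², integrable, decreasing and convex
on `(0,∞)`, with `f(x) → 0` and `f'(x) → 0` as `x → ∞`, then for every `ξ > 0`,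
`∫₀^∞ f(x) cos(ξx) dx = (1/ξ²) ∫₀^∞ f''(x)(1 - cos(ξx)) dx ≥ 0`. -/
theorem statement19 (f : ℝ → ℝ)
    (hf : ContDiffOn ℝ 2 f (Ici 0))
    (hint : IntegrableOn f (Ioi 0))
    (hf' : ∀ x : ℝ, 0 < x → deriv f x ≤ 0)
    (hf'' : ∀ x : ℝ, 0 < x → 0 ≤ deriv (deriv f) x)
    (hf0 : Tendsto f atTop (nhds 0))
    (hf'0 : Tendsto (deriv f) atTop (nhds 0)) :
    ∀ ξ : ℝ, 0 < ξ →
      (∫ x in Ioi (0:ℝ), f x * Real.cos (ξ * x))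
          = (1 / ξ ^ 2) * ∫ x in Ioi (0:ℝ), deriv (deriv f) x * (1 - Real.cos (ξ * x)) ∧
        0 ≤ ∫ x in Ioi (0:ℝ), f x * Real.cos (ξ * x) :=
  statement19_general f hf hint hf'' hf0 hf'0
end
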